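/- Let m, n, r be rational numbers with m^2, n^2, r^2 pairwise distinct. There exists a monic quadratic polynomial f(x) = x^2 + a*x + b with rational coefficients satisfying f(m^2) = n^2, f(n^2) = r^2, f(r^2) = m^2 if and only if m^4*(1 - n^2 + r^2) + m^2*(-n^2 + n^4 - r^2*(1 + r^2)) + r^4 - n^4*(r^2 - 1) + n^2*r^2*(r^2 - 1) = 0. In that case a = (-m^6 + m^2*n^4 - n^6 + m^4*r^2 + n^2*r^4 - r^6)/((m^2 - n^2)*(m^2 - r^2)*(n^2 - r^2)) and b = (m^6*n^2 - m^4*n^4 + n^6*r^2 - m^4*r^4 - n^4*r^4 + m^2*r^6)/((-m^2 + n^2)*(n^2 - r^2)*(-m^2 + r^2)). -/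
import Mathlib

theorem three_cycle_of_squares_classification (m n r : ℚ)
    (h1 : m^2 ≠ n^2) (h2 : n^2 ≠ r^2) (h3 : m^2 ≠ r^2) :
    ((∃ a b : ℚ, (m^2)^2 + a*(m^2) + b = n^2 ∧ (n^2)^2 + a*(n^2) + b = r^2 ∧
        (r^2)^2 + a*(r^2) + b = m^2) ↔
      m^4*(1 - n^2 + r^2) + m^2*(-n^2 + n^4 - r^2*(1 + r^2)) + r^4 -
        n^4*(r^2 - 1) + n^2*r^2*(r^2 - 1) = 0) ∧
    (∀ a b : ℚ, (m^2)^2 + a*(m^2) + b = n^2 → (n^2)^2 + a*(n^2) + b = r^2 →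
      (r^2)^2 + a*(r^2) + b = m^2 →
      a = (-m^6 + m^2*n^4 - n^6 + m^4*r^2 + n^2*r^4 - r^6) /
        ((m^2 - n^2)*(m^2 - r^2)*(n^2 - r^2)) ∧
      b = (m^6*n^2 - m^4*n^4 + n^6*r^2 - m^4*r^4 - n^4*r^4 + m^2*r^6) /
        ((-m^2 + n^2)*(n^2 - r^2)*(-m^2 + r^2))) := by
  have d1 : m^2 - n^2 ≠ 0 := sub_ne_zero.mpr h1
  have d2 : n^2 - r^2 ≠ 0 := sub_ne_zero.mpr h2
  have d3 : m^2 - r^2 ≠ 0 := sub_ne_zero.mpr h3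
  have hD : (m^2 - n^2)*(m^2 - r^2)*(n^2 - r^2) ≠ 0 := by
    exact mul_ne_zero (mul_ne_zero d1 d3) d2
  constructor
  · constructor
    · rintro ⟨a, b, e1, e2, e3⟩
      linear_combination (r^2 - n^2)*e1 + (m^2 - r^2)*e2 + (n^2 - m^2)*e3
    · intro hc
      refine ⟨(-m^6 + m^2*n^4 - n^6 + m^4*r^2 + n^2*r^4 - r^6) /
        ((m^2 - n^2)*(m^2 - r^2)*(n^2 - r^2)),
        (m^6*n^2 - m^4*n^4 + n^6*r^2 - m^4*r^4 - n^4*r^4 + m^2*r^6) /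
        ((m^2 - n^2)*(m^2 - r^2)*(n^2 - r^2)), ?_, ?_, ?_⟩
      · field_simp
        linear_combination (-(m^2)^2) * hc
      · field_simp
        linear_combination (-(n^2)^2) * hc
      · field_simp
        linear_combination (-(r^2)^2) * hc
  · intro a b e1 e2 e3
    have hBD : (-m^2 + n^2)*(n^2 - r^2)*(-m^2 + r^2)
        = (m^2 - n^2)*(m^2 - r^2)*(n^2 - r^2) := by ring
    constructor
    · rw [eq_div_iff hD]
      linear_combination ((m^2-r^2)*(n^2-r^2) - (m^2+n^2)*(n^2-r^2))*e1 +
        (-(m^2-r^2)*(n^2-r^2) + (m^2+n^2)*(n^2-r^2) + (m^2+n^2)*(m^2-n^2))*e2 +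
        (-(m^2+n^2)*(m^2-n^2))*e3
    · rw [hBD, eq_div_iff hD]
      linear_combination (-(n^2)*(r^2)^2 + (n^2)^2*(r^2))*e1 +
        ((m^2)*(r^2)^2 - (m^2)^2*(r^2))*e2 +
        (-(m^2)*(n^2)^2 + (m^2)^2*(n^2))*e3
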